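/- Let p be a prime, i any integer, and j ∈ {0, ..., p-1}. Then F_p(ip + j) ≡ -ip (mod p^2), where F_p(x) = x(x-1)···(x-(p-1)). -/

import Mathlib

lemma key_prod (p n : ℕ) [hFp : Fact p.Prime] (hn : n < p) :
    ∏ k ∈ (Finset.range p).erase n, ((n : ZMod p) - (k : ZMod p)) = -1 := by
  have hp : p.Prime := hFp.out
  have hcastval : ∀ x : ZMod p, ((x.val : ℕ) : ZMod p) = x := ZMod.natCast_rightInverse
  have hinj : ∀ a b : ℕ, a < p → b < p → (a : ZMod p) = (b : ZMod p) → a = b := by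
    intro a b ha hb h
    have := congrArg ZMod.val h
    rwa [ZMod.val_cast_of_lt ha, ZMod.val_cast_of_lt hb] at this
  rw [← ZMod.prod_Ico_one_prime p]
  refine Finset.prod_bij' (fun k _ => ((n : ZMod p) - k).val)
    (fun m _ => ((n : ZMod p) - m).val) ?_ ?_ ?_ ?_ ?_
  · intro k hk
    rw [Finset.mem_erase, Finset.mem_range] at hk
    rw [Finset.mem_Ico]
    refine ⟨?_, ZMod.val_lt _⟩
    rw [Nat.one_le_iff_ne_zero]
    intro h0
    have h1 : (n : ZMod p) - k = 0 := (ZMod.val_eq_zero _).mp h0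
    exact hk.1 (hinj k n hk.2 hn (sub_eq_zero.mp h1).symm)
  · intro m hm
    rw [Finset.mem_Ico] at hm
    rw [Finset.mem_erase, Finset.mem_range]
    constructor
    · intro h
      have h2 : (n : ZMod p) - m = (n : ZMod p) := by
        rw [← hcastval ((n : ZMod p) - m), h]
      have hm0 : (m : ZMod p) = 0 := by linear_combination -h2
      have := hinj m 0 hm.2 hp.pos (by simpa using hm0)
      omega
    · exact ZMod.val_lt _
  · intro k hk
    rw [Finset.mem_erase, Finset.mem_range] at hk
    rw [hcastval]
    have h1 : (n : ZMod p) - ((n : ZMod p) - k) = k := by ring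
    rw [h1, ZMod.val_cast_of_lt hk.2]
  · intro m hm
    rw [hcastval]
    have h1 : (n : ZMod p) - ((n : ZMod p) - m) = m := by ring
    rw [Finset.mem_Ico] at hm
    rw [h1, ZMod.val_cast_of_lt hm.2]
  · intro k _
    rw [hcastval]

theorem stmt_6 (p : ℕ) (hp : p.Prime) (i : ℤ) (j : ℤ) (hj0 : 0 ≤ j) (hjp : j < p) :
    (p : ℤ) ^ 2 ∣ ((∏ k ∈ Finset.range p, (i * p + j - k)) - (-(i * p))) := by
  haveI : Fact p.Prime := ⟨hp⟩
  set n := j.toNat with hn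
  have hjn : (n : ℤ) = j := Int.toNat_of_nonneg hj0
  have hnp : n < p := by omega
  have hmem : n ∈ Finset.range p := Finset.mem_range.mpr hnp
  rw [← Finset.mul_prod_erase _ _ hmem]
  set Q := ∏ k ∈ (Finset.range p).erase n, (i * p + j - k) with hQ
  have hfn : i * (p : ℤ) + j - (n : ℤ) = i * p := by rw [hjn]; ring
  rw [hfn]
  have hdvd : (p : ℤ) ∣ Q + 1 := by
    have : ((Q + 1 : ℤ) : ZMod p) = 0 := by
      push_cast [hQ]
      have : ∀ k ∈ (Finset.range p).erase n,
          ((i : ZMod p) * (p : ZMod p) + (j : ZMod p) - (k : ZMod p))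
          = ((n : ZMod p) - (k : ZMod p)) := by
        intro k _
        rw [← hjn]
        push_cast
        simp [ZMod.natCast_self]
      rw [Finset.prod_congr rfl this, key_prod p n hnp]
      ring
    exact (ZMod.intCast_zmod_eq_zero_iff_dvd _ _).mp this
  have : i * (p : ℤ) * Q - -(i * p) = (i * p) * (Q + 1) := by ring
  rw [this]
  have h1 : (p : ℤ) ∣ i * p := dvd_mul_left _ _
  calc (p : ℤ) ^ 2 = p * p := sq _
  _ ∣ (i * p) * (Q + 1) := mul_dvd_mul h1 hdvd
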